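/- Let ω be a differentiable 2-form on ℝ⁴ that is closed, self-dual at every point, and vanishes identically on the line {x₁=x₂=x₃=0} (i.e. ω(θ,0,0,0)=0 for all θ). For each θ define the 3×3 real matrix L(θ) by L(θ)ᵢⱼ = ∂/∂xⱼ [ω(·)(e₀,eᵢ)] evaluated at (θ,0,0,0), for i,j ∈ {1,2,3}. Then L(θ) is symmetric and has trace zero for every θ. -/

import Mathlib

noncomputable section

/-- The standard basis vectors of ℝ⁴ (coordinates (θ,x₁,x₂,x₃)). -/
def e (i : Fin 4) : Fin 4 → ℝ := Pi.single i 1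

/-- The point (θ,0,0,0) on the singular circle/line C. -/
def line (θ : ℝ) : Fin 4 → ℝ := Pi.single 0 θ

/-- If ω is a differentiable 2-form on ℝ⁴ which is closed, self-dual at every point,
and vanishes on the line {x₁=x₂=x₃=0}, then the matrix of first partial derivatives
L(θ)ᵢⱼ = ∂/∂xⱼ [ω(·)(e₀,eᵢ)] at (θ,0,0,0) is symmetric and traceless. -/
theorem L_isSymm_traceless
    (ω : (Fin 4 → ℝ) → ((Fin 4 → ℝ) →L[ℝ] (Fin 4 → ℝ) →L[ℝ] ℝ))
    (hdiff : Differentiable ℝ ω)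
    (halt : ∀ p u v, ω p u v = -ω p v u)
    (hclosed : ∀ p u v w : Fin 4 → ℝ,
      fderiv ℝ ω p u v w - fderiv ℝ ω p v u w + fderiv ℝ ω p w u v = 0)
    (hsd : ∀ p : Fin 4 → ℝ,
      ω p (e 0) (e 1) = ω p (e 2) (e 3) ∧
      ω p (e 0) (e 2) = ω p (e 3) (e 1) ∧
      ω p (e 0) (e 3) = ω p (e 1) (e 2))
    (hzero : ∀ θ : ℝ, ω (line θ) = 0)
    (L : ℝ → Matrix (Fin 3) (Fin 3) ℝ)
    (hL : ∀ (θ : ℝ) (i j : Fin 3),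
      L θ i j = fderiv ℝ (fun q => ω q (e 0) (e i.succ)) (line θ) (e j.succ)) :
    ∀ θ : ℝ, (L θ).IsSymm ∧ Matrix.trace (L θ) = 0 := by
  classical
  have keyF : ∀ a b : Fin 4 → ℝ, (fun q => ω q a b) =
      fun q => ((ContinuousLinearMap.apply ℝ ℝ b).comp
        (ContinuousLinearMap.apply ℝ ((Fin 4 → ℝ) →L[ℝ] ℝ) a)) (ω q) := by
    intro a b; rfl
  have key : ∀ (p a b v : Fin 4 → ℝ),
      fderiv ℝ (fun q => ω q a b) p v = fderiv ℝ ω p v a b := by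
    intro p a b v
    set ψ := (ContinuousLinearMap.apply ℝ ℝ b).comp
        (ContinuousLinearMap.apply ℝ ((Fin 4 → ℝ) →L[ℝ] ℝ) a) with hψ
    have h : fderiv ℝ (⇑ψ ∘ ω) p = ψ.comp (fderiv ℝ ω p) :=
      ((ψ.hasFDerivAt).comp (g := ⇑ψ) (f := ω) (g' := ψ) (f' := fderiv ℝ ω p) p (hdiff p).hasFDerivAt).fderiv
    have h' : (fun q => ψ (ω q)) = ⇑ψ ∘ ω := rfl
    rw [keyF a b, h', h]; rfl
  -- derivative in the e 0 direction vanishes on the line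
  have hlineD : ∀ θ : ℝ, HasDerivAt line (e 0) θ := by
    intro θ
    have hle : (line : ℝ → Fin 4 → ℝ) = fun t => t • e 0 := by
      funext t j
      simp [line, e, Pi.single_apply, Pi.smul_apply, mul_ite]
    rw [hle]
    simpa using (hasDerivAt_id θ).smul_const (e 0)
  have h0 : ∀ θ : ℝ, fderiv ℝ ω (line θ) (e 0) = 0 := by
    intro θ
    have hcomp : HasDerivAt (fun t => ω (line t)) (fderiv ℝ ω (line θ) (e 0)) θ :=
      (hdiff (line θ)).hasFDerivAt.comp_hasDerivAt (l := ω) (l' := fderiv ℝ ω (line θ)) θ (hlineD θ)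
    have hz : (fun t => ω (line t)) =
        fun _ : ℝ => (0 : (Fin 4 → ℝ) →L[ℝ] (Fin 4 → ℝ) →L[ℝ] ℝ) := funext hzero
    rw [hz] at hcomp
    exact hcomp.unique (hasDerivAt_const θ 0)
  -- equal components have equal derivatives
  have hEq : ∀ (a b c d : Fin 4 → ℝ), (∀ q, ω q a b = ω q c d) →
      ∀ p v, fderiv ℝ ω p v a b = fderiv ℝ ω p v c d := by
    intro a b c d h p v
    have hf : (fun q => ω q a b) = fun q => ω q c d := funext h
    rw [← key p a b v, hf, key]
  -- derivative of the alternating property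
  have haD : ∀ (p v u w : Fin 4 → ℝ),
      fderiv ℝ ω p v u w = - fderiv ℝ ω p v w u := by
    intro p v u w
    have h1 : (fun q => ω q u w) = fun q => -(ω q w u) := by
      funext q; rw [halt]
    calc fderiv ℝ ω p v u w = fderiv ℝ (fun q => ω q u w) p v := (key p u w v).symm
      _ = fderiv ℝ (fun q => -(ω q w u)) p v := by rw [h1]
      _ = - fderiv ℝ (fun q => ω q w u) p v := by rw [fderiv_fun_neg]; rfl
      _ = - fderiv ℝ ω p v w u := by rw [key]
  intro θ
  have D0 : ∀ a b : Fin 4 → ℝ, fderiv ℝ ω (line θ) (e 0) a b = 0 := by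
    intro a b; rw [h0 θ]; rfl
  have hLij : ∀ i j : Fin 3,
      L θ i j = fderiv ℝ ω (line θ) (e j.succ) (e 0) (e i.succ) := by
    intro i j; rw [hL, key]
  constructor
  · ext i j
    rw [Matrix.transpose_apply, hLij, hLij]
    have hc := hclosed (line θ) (e 0) (e i.succ) (e j.succ)
    have h1 := D0 (e i.succ) (e j.succ)
    linarith
  · have e1 : ((0 : Fin 3).succ) = (1 : Fin 4) := rfl
    have e2 : ((1 : Fin 3).succ) = (2 : Fin 4) := rfl
    have e3 : ((2 : Fin 3).succ) = (3 : Fin 4) := rfl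
    have ht : Matrix.trace (L θ) = L θ 0 0 + L θ 1 1 + L θ 2 2 := by
      simp [Matrix.trace, Fin.sum_univ_three, Matrix.diag]
    rw [ht, hLij, hLij, hLij, e1, e2, e3]
    have hs1 := hEq (e 0) (e 1) (e 2) (e 3) (fun q => (hsd q).1) (line θ) (e 1)
    have hs2 := hEq (e 0) (e 2) (e 3) (e 1) (fun q => (hsd q).2.1) (line θ) (e 2)
    have hs3 := hEq (e 0) (e 3) (e 1) (e 2) (fun q => (hsd q).2.2) (line θ) (e 3)
    have hc := hclosed (line θ) (e 1) (e 2) (e 3)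
    have ha := haD (line θ) (e 2) (e 3) (e 1)
    linarith
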